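/- Let A be a commutative ring, and let P and P' be cochain complexes of A-modules with P^i = 0 for all i > k and P'^i = 0 for all i > k'. Then H^l(P ⊗_A P') = 0 for all l > k + k', and there is an isomorphism of A-modules H^k(P) ⊗_A H^{k'}(P') ≅ H^{k+k'}(P ⊗_A P'), where P ⊗_A P' denotes the total tensor product complex. -/

import Mathlib

open CategoryTheory Limits MonoidalCategory

instance {C : Type*} [Category C] [MonoidalCategory C] [Preadditive C]
    [MonoidalPreadditive C] : (curriedTensor C).Additive where
  map_add := by intros; ext; exact MonoidalPreadditive.add_whiskerRight _ _

instance {C : Type*} [Category C] [MonoidalCategory C] [Preadditive C]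
    [MonoidalPreadditive C] (X : C) : ((curriedTensor C).obj X).Additive where
  map_add := by intros; exact MonoidalPreadditive.whiskerLeft_add _ _

/-- The total tensor product complex `K ⊗_A L` of two cochain complexes of `A`-modules. -/
noncomputable abbrev tensorComplex {A : Type} [CommRing A]
    (K L : CochainComplex (ModuleCat A) ℤ) : CochainComplex (ModuleCat A) ℤ :=
  HomologicalComplex.mapBifunctor K L (curriedTensor (ModuleCat A)) (ComplexShape.up ℤ)


section Aux
variable {A : Type} [CommRing A]

lemma aux_isZero_of_subsingleton' {M : ModuleCat A} (h : IsZero M) : Subsingleton M := by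
  exact ModuleCat.subsingleton_of_isZero h

lemma aux_tensor_isZero_left {M N : ModuleCat A} (h : IsZero M) :
    IsZero (M ⊗ N) := by
  have := aux_isZero_of_subsingleton' h
  have : Subsingleton (↑(M ⊗ N)) := inferInstanceAs (Subsingleton (TensorProduct A M N))
  exact ModuleCat.isZero_of_subsingleton _

lemma aux_tensor_isZero_right {M N : ModuleCat A} (h : IsZero N) :
    IsZero (M ⊗ N) := by
  have := aux_isZero_of_subsingleton' h
  have : Subsingleton (↑(M ⊗ N)) := inferInstanceAs (Subsingleton (TensorProduct A M N))
  exact ModuleCat.isZero_of_subsingleton _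

noncomputable def auxHomologyEquiv (K : CochainComplex (ModuleCat A) ℤ) (i : ℤ)
    (hz : IsZero (K.X (i + 1))) :
    K.homology i ≃ₗ[A] (↑(K.X i) ⧸ LinearMap.range (K.d (i - 1) i).hom) :=
  ((K.isoHomologyι i (i + 1) (by simp) (hz.eq_of_tgt _ _)) ≪≫
    (IsColimit.coconePointUniqueUpToIso
      (K.opcyclesIsCokernel (i - 1) i (by simp)) (colimit.isColimit _)) ≪≫
    ModuleCat.cokernelIsoRangeQuotient (K.d (i - 1) i)).toLinearEquiv

variable (P P' : CochainComplex (ModuleCat A) ℤ) (k k' : ℤ)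
variable (hP : ∀ i > k, IsZero (P.X i)) (hP' : ∀ i > k', IsZero (P'.X i))

include hP hP' in
lemma aux_X_isZero : ∀ l > k + k', IsZero ((tensorComplex P P').X l) := by
  intro l hl
  rw [IsZero.iff_id_eq_zero]
  apply HomologicalComplex.mapBifunctor.hom_ext
  intro i₁ i₂ h
  apply IsZero.eq_of_src
  have h' : i₁ + i₂ = l := h
  rcases lt_or_ge k i₁ with hk | hk
  · exact aux_tensor_isZero_left (hP _ hk)
  · exact aux_tensor_isZero_right (hP' _ (by omega))

include hP hP' in
lemma aux_homology_isZero : ∀ l > k + k', IsZero ((tensorComplex P P').homology l) :=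
  fun l hl => (ShortComplex.exact_iff_isZero_homology _).mp
    (ShortComplex.exact_of_isZero_X₂ (S := (tensorComplex P P').sc l) (aux_X_isZero P P' k k' hP hP' l hl))

end Aux


section RangeAux
variable {A : Type} [CommRing A] {M₀ M N N₀ : Type} [AddCommGroup M₀] [Module A M₀]
  [AddCommGroup M] [Module A M] [AddCommGroup N] [Module A N] [AddCommGroup N₀] [Module A N₀]

lemma aux_range_map_left (f : M₀ →ₗ[A] M) :
    LinearMap.range (TensorProduct.map (LinearMap.range f).subtype (LinearMap.id : N →ₗ[A] N)) =
      LinearMap.range (TensorProduct.map f (LinearMap.id : N →ₗ[A] N)) := by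
  rw [TensorProduct.range_map_eq_span_tmul, TensorProduct.range_map_eq_span_tmul]
  congr 1
  ext t
  simp only [Set.mem_setOf_eq, LinearMap.id_coe, id_eq, Submodule.coe_subtype]
  constructor
  · rintro ⟨⟨x, a, rfl⟩, n, rfl⟩; exact ⟨a, n, rfl⟩
  · rintro ⟨a, n, rfl⟩; exact ⟨⟨f a, a, rfl⟩, n, rfl⟩

lemma aux_range_map_right (g : N₀ →ₗ[A] N) :
    LinearMap.range (TensorProduct.map (LinearMap.id : M →ₗ[A] M) (LinearMap.range g).subtype) =
      LinearMap.range (TensorProduct.map (LinearMap.id : M →ₗ[A] M) g) := by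
  rw [TensorProduct.range_map_eq_span_tmul, TensorProduct.range_map_eq_span_tmul]
  congr 1
  ext t
  simp only [Set.mem_setOf_eq, LinearMap.id_coe, id_eq, Submodule.coe_subtype]
  constructor
  · rintro ⟨m, ⟨x, a, rfl⟩, rfl⟩; exact ⟨m, a, rfl⟩
  · rintro ⟨m, a, rfl⟩; exact ⟨m, ⟨g a, a, rfl⟩, rfl⟩

end RangeAux


section Main
variable {A : Type} [CommRing A] (P P' : CochainComplex (ModuleCat A) ℤ) (k k' : ℤ)
variable (hP : ∀ i > k, IsZero (P.X i)) (hP' : ∀ i > k', IsZero (P'.X i))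

include hP hP' in
lemma aux_kunneth :
    Nonempty ((TensorProduct A (P.homology k) (P'.homology k')) ≃ₗ[A]
      ((tensorComplex P P').homology (k + k'))) := by
  classical
  let ι₀ : (((curriedTensor (ModuleCat A)).obj (P.X k)).obj (P'.X k')) ⟶
      (tensorComplex P P').X (k + k') :=
    HomologicalComplex.ιMapBifunctor P P' (curriedTensor (ModuleCat A)) (ComplexShape.up ℤ)
      k k' (k + k') rfl
  let ι₁ : (((curriedTensor (ModuleCat A)).obj (P.X (k - 1))).obj (P'.X k')) ⟶
      (tensorComplex P P').X (k + k' - 1) :=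
    HomologicalComplex.ιMapBifunctor P P' (curriedTensor (ModuleCat A)) (ComplexShape.up ℤ)
      (k - 1) k' (k + k' - 1) (show k - 1 + k' = k + k' - 1 by omega)
  let ι₂ : (((curriedTensor (ModuleCat A)).obj (P.X k)).obj (P'.X (k' - 1))) ⟶
      (tensorComplex P P').X (k + k' - 1) :=
    HomologicalComplex.ιMapBifunctor P P' (curriedTensor (ModuleCat A)) (ComplexShape.up ℤ)
      k (k' - 1) (k + k' - 1) (show k + (k' - 1) = k + k' - 1 by omega)
  -- ι₀ is an isomorphism
  let ψ : (tensorComplex P P').X (k + k') ⟶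
      (((curriedTensor (ModuleCat A)).obj (P.X k)).obj (P'.X k')) :=
    HomologicalComplex.mapBifunctorDesc (fun i₁ i₂ h =>
      if h1 : i₁ = k ∧ i₂ = k' then eqToHom (by rw [h1.1, h1.2]) else 0)
  have hι₀ψ : ι₀ ≫ ψ = 𝟙 _ := by
    show HomologicalComplex.ιMapBifunctor P P' (curriedTensor (ModuleCat A)) (ComplexShape.up ℤ)
      k k' (k + k') rfl ≫ HomologicalComplex.mapBifunctorDesc _ = _
    rw [HomologicalComplex.ι_mapBifunctorDesc, dif_pos ⟨rfl, rfl⟩]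
    rfl
  have hψι₀ : ψ ≫ ι₀ = 𝟙 _ := by
    apply HomologicalComplex.mapBifunctor.hom_ext
    intro i₁ i₂ h
    have h' : i₁ + i₂ = k + k' := h
    by_cases h1 : i₁ = k ∧ i₂ = k'
    · obtain ⟨rfl, rfl⟩ := h1
      rw [← Category.assoc]
      show (HomologicalComplex.ιMapBifunctor P P' (curriedTensor (ModuleCat A))
        (ComplexShape.up ℤ) i₁ i₂ (i₁ + i₂) h ≫ HomologicalComplex.mapBifunctorDesc _) ≫ _ = _
      rw [HomologicalComplex.ι_mapBifunctorDesc, dif_pos ⟨rfl, rfl⟩]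
      simp only [eqToHom_refl, Category.id_comp, Category.comp_id]
      try rfl
    · apply IsZero.eq_of_src
      rcases lt_or_ge k i₁ with hk | hk
      · exact aux_tensor_isZero_left (hP _ hk)
      · rcases eq_or_lt_of_le hk with he | hlt
        · exact absurd ⟨he, by omega⟩ h1
        · exact aux_tensor_isZero_right (hP' _ (by omega))
  have hiso : IsIso ι₀ := ⟨ψ, hι₀ψ, hψι₀⟩
  -- differential computations
  have hd1 : ι₁ ≫ (tensorComplex P P').d (k + k' - 1) (k + k') =
      ((curriedTensor (ModuleCat A)).map (P.d (k - 1) k)).app (P'.X k') ≫ ι₀ := by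
    rw [HomologicalComplex.mapBifunctor.d_eq, Preadditive.comp_add,
      HomologicalComplex.mapBifunctor.ι_D₁, HomologicalComplex.mapBifunctor.ι_D₂,
      HomologicalComplex.mapBifunctor.d₁_eq _ _ _ _
        (show (ComplexShape.up ℤ).Rel (k - 1) k by show k - 1 + 1 = k; omega) k' (k + k') rfl,
      HomologicalComplex.mapBifunctor.d₂_eq _ _ _ _ (k - 1)
        (show (ComplexShape.up ℤ).Rel k' (k' + 1) from rfl) (k + k')
        (show k - 1 + (k' + 1) = k + k' by omega),
      (hP' (k' + 1) (by omega)).eq_of_tgt (P'.d k' (k' + 1)) 0]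
    simp only [Functor.map_zero, zero_comp, smul_zero, add_zero]
    rw [show ComplexShape.ε₁ (ComplexShape.up ℤ) (ComplexShape.up ℤ) (ComplexShape.up ℤ)
      (k - 1, k') = 1 from rfl, one_smul]
  have hd2 : ι₂ ≫ (tensorComplex P P').d (k + k' - 1) (k + k') =
      k.negOnePow • (((curriedTensor (ModuleCat A)).obj (P.X k)).map (P'.d (k' - 1) k') ≫ ι₀) := by
    rw [HomologicalComplex.mapBifunctor.d_eq, Preadditive.comp_add,
      HomologicalComplex.mapBifunctor.ι_D₁, HomologicalComplex.mapBifunctor.ι_D₂,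
      HomologicalComplex.mapBifunctor.d₁_eq _ _ _ _
        (show (ComplexShape.up ℤ).Rel k (k + 1) from rfl) (k' - 1) (k + k')
        (show k + 1 + (k' - 1) = k + k' by omega),
      HomologicalComplex.mapBifunctor.d₂_eq _ _ _ _ k
        (show (ComplexShape.up ℤ).Rel (k' - 1) k' by show k' - 1 + 1 = k'; omega) (k + k') rfl,
      (hP (k + 1) (by omega)).eq_of_tgt (P.d k (k + 1)) 0]
    simp only [Functor.map_zero, NatTrans.app_zero, zero_app, zero_comp, smul_zero, zero_add]
    rw [show ComplexShape.ε₂ (ComplexShape.up ℤ) (ComplexShape.up ℤ) (ComplexShape.up ℤ)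
      (k, k' - 1) = k.negOnePow from rfl]
  -- joint surjectivity in degree k + k' - 1
  have hsurj : LinearMap.range ι₁.hom ⊔ LinearMap.range ι₂.hom =
      (⊤ : Submodule A ↑((tensorComplex P P').X (k + k' - 1))) := by
    rw [eq_top_iff]
    rintro x -
    have hq : (show (tensorComplex P P').X (k + k' - 1) ⟶
        ModuleCat.of A (↑((tensorComplex P P').X (k + k' - 1)) ⧸
          (LinearMap.range ι₁.hom ⊔ LinearMap.range ι₂.hom)) from
        ModuleCat.ofHom (LinearMap.range ι₁.hom ⊔ LinearMap.range ι₂.hom).mkQ) = 0 := by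
      apply HomologicalComplex.mapBifunctor.hom_ext
      intro i₁ i₂ h
      have h' : i₁ + i₂ = k + k' - 1 := h
      rw [comp_zero]
      by_cases h1 : i₁ = k - 1 ∧ i₂ = k'
      · obtain ⟨rfl, rfl⟩ := h1
        refine ModuleCat.hom_ext (LinearMap.ext fun v => ?_)
        exact (Submodule.Quotient.mk_eq_zero _).mpr
          (Submodule.mem_sup_left ⟨v, rfl⟩)
      · by_cases h2 : i₁ = k ∧ i₂ = k' - 1
        · obtain ⟨rfl, rfl⟩ := h2
          refine ModuleCat.hom_ext (LinearMap.ext fun v => ?_)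
          exact (Submodule.Quotient.mk_eq_zero _).mpr
            (Submodule.mem_sup_right ⟨v, rfl⟩)
        · apply IsZero.eq_of_src
          rcases lt_or_ge k i₁ with hk | hk
          · exact aux_tensor_isZero_left (hP _ hk)
          · have hk2 : k' < i₂ := by
              rcases eq_or_lt_of_le hk with he | hlt
              · exact absurd ⟨he, by omega⟩ h2
              · rcases eq_or_lt_of_le (by omega : i₁ ≤ k - 1) with he2 | hlt2
                · exact absurd ⟨he2, by omega⟩ h1
                · omega
            exact aux_tensor_isZero_right (hP' _ hk2)
    have hx := LinearMap.congr_fun (congrArg ModuleCat.Hom.hom hq) x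
    simp only [ModuleCat.hom_zero, LinearMap.zero_apply] at hx
    exact (Submodule.Quotient.mk_eq_zero _).mp hx
  -- the two composite equalities, as linear maps
  have hcomp1 : ((tensorComplex P P').d (k + k' - 1) (k + k')).hom.comp ι₁.hom =
      ι₀.hom.comp
        (TensorProduct.map (P.d (k - 1) k).hom (LinearMap.id : ↑(P'.X k') →ₗ[A] ↑(P'.X k'))) := congrArg ModuleCat.Hom.hom hd1
  have hcomp2 : ((tensorComplex P P').d (k + k' - 1) (k + k')).hom.comp ι₂.hom =
      k.negOnePow • (ι₀.hom.comp
        (TensorProduct.map (LinearMap.id : ↑(P.X k) →ₗ[A] ↑(P.X k)) (P'.d (k' - 1) k').hom)) := congrArg ModuleCat.Hom.hom hd2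
  -- the range of the incoming differential
  have key : LinearMap.range ((tensorComplex P P').d (k + k' - 1) (k + k')).hom =
      Submodule.map ι₀.hom
        (LinearMap.range (TensorProduct.map (P.d (k - 1) k).hom
            (LinearMap.id : ↑(P'.X k') →ₗ[A] ↑(P'.X k'))) ⊔
         LinearMap.range (TensorProduct.map (LinearMap.id : ↑(P.X k) →ₗ[A] ↑(P.X k))
            (P'.d (k' - 1) k').hom)) := by
    apply le_antisymm
    · rintro y hy
      obtain ⟨x, rfl⟩ := hy
      have hx : x ∈ LinearMap.range ι₁.hom ⊔ LinearMap.range ι₂.hom := hsurj ▸ Submodule.mem_top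
      obtain ⟨y₁, ⟨a, rfl⟩, y₂, ⟨b, rfl⟩, rfl⟩ := Submodule.mem_sup.mp hx
      rw [map_add, Submodule.map_sup]
      refine Submodule.add_mem _ ?_ ?_
      · have e1 := LinearMap.congr_fun hcomp1 a
        simp only [LinearMap.comp_apply] at e1
        rw [e1]
        exact Submodule.mem_sup_left (Submodule.mem_map_of_mem ⟨a, rfl⟩)
      · have e2 := LinearMap.congr_fun hcomp2 b
        simp only [LinearMap.comp_apply, LinearMap.smul_apply] at e2
        rw [e2]
        rcases Int.units_eq_one_or k.negOnePow with hu | hu <;> rw [hu]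
        · rw [one_smul]
          exact Submodule.mem_sup_right (Submodule.mem_map_of_mem ⟨b, rfl⟩)
        · rw [Units.smul_def]
          simp only [Units.val_neg, Units.val_one, neg_smul, one_smul]
          exact Submodule.neg_mem _
            (Submodule.mem_sup_right (Submodule.mem_map_of_mem ⟨b, rfl⟩))
    · rw [Submodule.map_sup]
      refine sup_le ?_ ?_
      · rintro y hy
        obtain ⟨y₁, ⟨a, rfl⟩, rfl⟩ := Submodule.mem_map.mp hy
        refine ⟨ι₁ a, ?_⟩
        have e1 := LinearMap.congr_fun hcomp1 a
        simpa only [LinearMap.comp_apply] using e1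
      · rintro y hy
        obtain ⟨y₂, ⟨b, rfl⟩, rfl⟩ := Submodule.mem_map.mp hy
        rcases Int.units_eq_one_or k.negOnePow with hu | hu
        · refine ⟨ι₂ b, ?_⟩
          have e2 := LinearMap.congr_fun hcomp2 b
          rw [hu, one_smul] at e2
          simpa only [LinearMap.comp_apply] using e2
        · refine ⟨-(ι₂ b), ?_⟩
          have e2 := LinearMap.congr_fun hcomp2 b
          rw [hu] at e2
          simp only [LinearMap.comp_apply, LinearMap.smul_apply, Units.smul_def,
            Units.val_neg, Units.val_one, neg_smul, one_smul] at e2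
          rw [map_neg, e2]
          simp only [LinearMap.neg_apply, LinearMap.comp_apply, neg_neg]
          try rfl
  -- assemble the chain of linear equivalences
  have hmap : Submodule.map ((asIso ι₀).toLinearEquiv.toLinearMap)
      (LinearMap.range (TensorProduct.map
          (LinearMap.range (P.d (k - 1) k).hom).subtype
          (LinearMap.id : ↑(P'.X k') →ₗ[A] ↑(P'.X k'))) ⊔
       LinearMap.range (TensorProduct.map (LinearMap.id : ↑(P.X k) →ₗ[A] ↑(P.X k))
          (LinearMap.range (P'.d (k' - 1) k').hom).subtype)) =
      LinearMap.range ((tensorComplex P P').d (k + k' - 1) (k + k')).hom := by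
    rw [aux_range_map_left, aux_range_map_right, key]
    rfl
  have eH := auxHomologyEquiv P k (hP (k + 1) (by omega))
  have eH' := auxHomologyEquiv P' k' (hP' (k' + 1) (by omega))
  have eT := auxHomologyEquiv (tensorComplex P P') (k + k')
    (aux_X_isZero P P' k k' hP hP' (k + k' + 1) (by omega))
  exact ⟨(TensorProduct.congr eH eH').trans
    ((TensorProduct.quotientTensorQuotientEquiv
        (LinearMap.range (P.d (k - 1) k).hom) (LinearMap.range (P'.d (k' - 1) k').hom)).trans
      ((Submodule.Quotient.equiv _ _ (asIso ι₀).toLinearEquiv hmap).trans eT.symm))⟩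

end Main

/-!
(Künneth trick.) If `P` and `P'` are cochain complexes of `A`-modules with `P^i = 0`
for `i > k` and `P'^i = 0` for `i > k'`, then `H^l(P ⊗_A P') = 0` for all
`l > k + k'`, and `H^k(P) ⊗_A H^{k'}(P') ≅ H^{k+k'}(P ⊗_A P')` as `A`-modules.
-/
theorem stmt_17 (A : Type) [CommRing A] (P P' : CochainComplex (ModuleCat A) ℤ)
    (k k' : ℤ)
    (hP : ∀ i > k, IsZero (P.X i)) (hP' : ∀ i > k', IsZero (P'.X i)) :
    (∀ l > k + k', IsZero ((tensorComplex P P').homology l)) ∧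
    Nonempty ((TensorProduct A (P.homology k) (P'.homology k')) ≃ₗ[A]
      ((tensorComplex P P').homology (k + k'))) := by
  exact ⟨aux_homology_isZero P P' k k' hP hP', aux_kunneth P P' k k' hP hP'⟩
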